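/- Let θ ∈ (0, π) and φ ∈ (−π/2, π/2), and set Ψ = sin θ cos φ (so Ψ > 0), Φ = sin θ sin φ, Ω = cos θ. Let K > 0, K_y > 0 and a₀, b₀, c₀ > 0 be real numbers. Then the triple integral ∫_{−c₀}^{c₀} ∫_{−b₀}^{b₀} ∫_{−a₀}^{a₀} [1 − 2aΩ − 2KbΩ − 2K_y c Φ + a² + K²b² + 2Kab + K_y²c²]^{−3/2} da db dc equals (1/(K·K_y)) · [ F(K_y c₀ − Φ, K b₀ + a₀ − Ω) − F(K_y c₀ − Φ, K b₀ − a₀ − Ω) + F(K_y c₀ − Φ, K b₀ + a₀ + Ω) − F(K_y c₀ − Φ, K b₀ − a₀ + Ω) + F(K_y c₀ + Φ, K b₀ + a₀ − Ω) − F(K_y c₀ + Φ, K b₀ − a₀ − Ω) + F(K_y c₀ + Φ, K b₀ + a₀ + Ω) − F(K_y c₀ + Φ, K b₀ − a₀ + Ω) ]. -/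

import Mathlib

open Real

/-- `F(x, y) := arcsinh(x/√(Ψ² + y²)) + (y/Ψ)·arctan(x·y/(Ψ·√(Ψ² + x² + y²)))`. -/
noncomputable def F (Ψ x y : ℝ) : ℝ :=
  Real.arsinh (x / Real.sqrt (Ψ ^ 2 + y ^ 2)) +
    (y / Ψ) * Real.arctan (x * y / (Ψ * Real.sqrt (Ψ ^ 2 + x ^ 2 + y ^ 2)))

noncomputable def Gaux (q t : ℝ) : ℝ := t / (q * Real.sqrt (q + t ^ 2))
noncomputable def Haux (q t : ℝ) : ℝ := Real.sqrt (q + t ^ 2) / q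

lemma hasDerivAt_sqrt_q (q t : ℝ) (hq : 0 < q) :
    HasDerivAt (fun t => Real.sqrt (q + t ^ 2)) (t / Real.sqrt (q + t ^ 2)) t := by
  have hqt : 0 < q + t ^ 2 := by positivity
  have h1 : HasDerivAt (fun t : ℝ => q + t ^ 2) (2 * t) t := by
    simpa using ((hasDerivAt_pow 2 t).const_add q)
  have := (Real.hasDerivAt_sqrt (ne_of_gt hqt)).comp t h1
  refine this.congr_deriv (Eq.symm ?_)
  have hs : 0 < Real.sqrt (q + t ^ 2) := Real.sqrt_pos.2 hqt
  field_simp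

lemma hasDerivAt_Gaux (q : ℝ) (hq : 0 < q) (t : ℝ) :
    HasDerivAt (fun t => Gaux q t) ((q + t ^ 2) ^ (-(3 : ℝ) / 2)) t := by
  have hqt : 0 < q + t ^ 2 := by positivity
  have hs : 0 < Real.sqrt (q + t ^ 2) := Real.sqrt_pos.2 hqt
  have hsq : Real.sqrt (q + t ^ 2) ^ 2 = q + t ^ 2 := Real.sq_sqrt hqt.le
  have hden : q * Real.sqrt (q + t ^ 2) ≠ 0 := by positivity
  have h := (hasDerivAt_id t).div ((hasDerivAt_sqrt_q q t hq).const_mul q) hden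
  refine h.congr_deriv (Eq.symm ?_)
  rw [show (-(3:ℝ)/2) = -((3:ℝ)/2) by ring, Real.rpow_neg hqt.le,
    show ((3:ℝ)/2) = 1 + (1/2:ℝ) by norm_num, Real.rpow_add hqt, Real.rpow_one,
    ← Real.sqrt_eq_rpow]
  rw [eq_div_iff (by positivity)]
  field_simp
  simp only [id_eq]
  linear_combination (-t^2) * hsq

lemma hasDerivAt_Haux (q : ℝ) (hq : 0 < q) (t : ℝ) :
    HasDerivAt (fun t => Haux q t) (Gaux q t) t := by
  have := (hasDerivAt_sqrt_q q t hq).div_const q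
  simpa [Haux, Gaux, div_div, mul_comm] using this

lemma hasDerivAt_sqrt3 (Ψ y : ℝ) (hΨ : 0 < Ψ) (x : ℝ) :
    HasDerivAt (fun x => Real.sqrt (Ψ ^ 2 + x ^ 2 + y ^ 2))
      (x / Real.sqrt (Ψ ^ 2 + x ^ 2 + y ^ 2)) x := by
  have hqt : 0 < Ψ ^ 2 + x ^ 2 + y ^ 2 := by positivity
  have h1 : HasDerivAt (fun x : ℝ => Ψ ^ 2 + x ^ 2 + y ^ 2) (2 * x) x := by
    simpa using (((hasDerivAt_pow 2 x).const_add (Ψ ^ 2)).add_const (y ^ 2))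
  have := (Real.hasDerivAt_sqrt (ne_of_gt hqt)).comp x h1
  refine this.congr_deriv (Eq.symm ?_)
  have hs : 0 < Real.sqrt (Ψ ^ 2 + x ^ 2 + y ^ 2) := Real.sqrt_pos.2 hqt
  field_simp

lemma hasDerivAt_F (Ψ y : ℝ) (hΨ : 0 < Ψ) (x : ℝ) :
    HasDerivAt (fun x => F Ψ x y)
      (Real.sqrt (Ψ ^ 2 + x ^ 2 + y ^ 2) / (Ψ ^ 2 + x ^ 2)) x := by
  have hq : 0 < Ψ ^ 2 + y ^ 2 := by positivity
  have hr2 : 0 < Ψ ^ 2 + x ^ 2 + y ^ 2 := by positivity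
  set c := Real.sqrt (Ψ ^ 2 + y ^ 2) with hc_def
  set r := Real.sqrt (Ψ ^ 2 + x ^ 2 + y ^ 2) with hr_def
  have hc : 0 < c := Real.sqrt_pos.2 hq
  have hr : 0 < r := Real.sqrt_pos.2 hr2
  have hc2 : c ^ 2 = Ψ ^ 2 + y ^ 2 := Real.sq_sqrt hq.le
  have hrr : r ^ 2 = Ψ ^ 2 + x ^ 2 + y ^ 2 := Real.sq_sqrt hr2.le
  -- arsinh part
  have h1 : HasDerivAt (fun x => Real.arsinh (x / c)) (1 / r) x := by
    have hdiv : HasDerivAt (fun x : ℝ => x / c) (1 / c) x := by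
      simpa using (hasDerivAt_id x).div_const c
    have := (Real.hasDerivAt_arsinh (x / c)).comp x hdiv
    refine this.congr_deriv (Eq.symm ?_)
    have h15 : Real.sqrt (1 + (x / c) ^ 2) = r / c := by
      rw [show 1 + (x / c) ^ 2 = r ^ 2 / c ^ 2 by
        field_simp; linear_combination hc2 - hrr]
      rw [Real.sqrt_div (by positivity), Real.sqrt_sq hr.le, Real.sqrt_sq hc.le]
    rw [h15]
    field_simp
  -- arctan part
  have h2 : HasDerivAt (fun x => (y / Ψ) *
      Real.arctan (x * y / (Ψ * Real.sqrt (Ψ ^ 2 + x ^ 2 + y ^ 2))))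
      (y ^ 2 / ((Ψ ^ 2 + x ^ 2) * r)) x := by
    have hu : HasDerivAt (fun x => x * y / (Ψ * Real.sqrt (Ψ ^ 2 + x ^ 2 + y ^ 2)))
        ((y * (Ψ * r) - x * y * (Ψ * (x / r))) / (Ψ * r) ^ 2) x := by
      have h := ((hasDerivAt_id x).mul_const y).div
        ((hasDerivAt_sqrt3 Ψ y hΨ x).const_mul Ψ) (by positivity)
      simp at h; exact h
    have := ((Real.hasDerivAt_arctan (x * y / (Ψ * r))).comp x hu).const_mul (y / Ψ)
    refine this.congr_deriv (Eq.symm ?_)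
    have h1u : 1 + (x * y / (Ψ * r)) ^ 2 = (Ψ ^ 2 + x ^ 2) * (Ψ ^ 2 + y ^ 2) / (Ψ ^ 2 * r ^ 2) := by
      field_simp
      linear_combination Ψ^2 * hrr
    rw [h1u]
    have hx2 : (0:ℝ) < Ψ ^ 2 + x ^ 2 := by positivity
    field_simp
    ring_nf
    linear_combination (-y^2) * hrr
  have := h1.add h2
  refine this.congr_deriv (Eq.symm ?_)
  field_simp
  linear_combination hrr
lemma F_neg (Ψ x y : ℝ) : F Ψ (-x) y = - F Ψ x y := by
  simp only [F, neg_sq, neg_div, neg_mul, Real.arsinh_neg, Real.arctan_neg]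
  ring

lemma Haux_neg (q t : ℝ) : Haux q (-t) = Haux q t := by simp [Haux, neg_sq]

lemma contGaux (q : ℝ) (hq : 0 < q) : Continuous (fun t => Gaux q t) := by
  unfold Gaux
  exact continuous_id.div
    (continuous_const.mul (Real.continuous_sqrt.comp (by continuity)))
    (fun t => by positivity)

theorem stmt_0 (θ φ K Ky a₀ b₀ c₀ Ψ Φ Ω : ℝ)
    (hθ : θ ∈ Set.Ioo 0 Real.pi) (hφ : φ ∈ Set.Ioo (-(Real.pi / 2)) (Real.pi / 2))
    (hΨ : Ψ = Real.sin θ * Real.cos φ) (hΦ : Φ = Real.sin θ * Real.sin φ)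
    (hΩ : Ω = Real.cos θ)
    (hK : 0 < K) (hKy : 0 < Ky) (ha₀ : 0 < a₀) (hb₀ : 0 < b₀) (hc₀ : 0 < c₀) :
    (∫ c in (-c₀)..c₀, ∫ b in (-b₀)..b₀, ∫ a in (-a₀)..a₀,
        (1 - 2 * a * Ω - 2 * K * b * Ω - 2 * Ky * c * Φ
          + a ^ 2 + K ^ 2 * b ^ 2 + 2 * K * a * b + Ky ^ 2 * c ^ 2) ^ (-(3 : ℝ) / 2))
      = (1 / (K * Ky)) *
        (F Ψ (Ky * c₀ - Φ) (K * b₀ + a₀ - Ω) - F Ψ (Ky * c₀ - Φ) (K * b₀ - a₀ - Ω)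
          + F Ψ (Ky * c₀ - Φ) (K * b₀ + a₀ + Ω) - F Ψ (Ky * c₀ - Φ) (K * b₀ - a₀ + Ω)
          + F Ψ (Ky * c₀ + Φ) (K * b₀ + a₀ - Ω) - F Ψ (Ky * c₀ + Φ) (K * b₀ - a₀ - Ω)
          + F Ψ (Ky * c₀ + Φ) (K * b₀ + a₀ + Ω) - F Ψ (Ky * c₀ + Φ) (K * b₀ - a₀ + Ω)) := by
  obtain ⟨hθ0, hθπ⟩ := hθ
  have hsin : 0 < Real.sin θ := Real.sin_pos_of_pos_of_lt_pi hθ0 hθπ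
  have hcos : 0 < Real.cos φ := Real.cos_pos_of_mem_Ioo hφ
  have hP : 0 < Ψ := by rw [hΨ]; positivity
  have hone : Ψ ^ 2 + Φ ^ 2 + Ω ^ 2 = 1 := by
    rw [hΨ, hΦ, hΩ]
    have h1 := Real.sin_sq_add_cos_sq θ
    have h2 := Real.sin_sq_add_cos_sq φ
    nlinarith [h1, h2]
  have hqpos : ∀ c : ℝ, 0 < Ψ ^ 2 + (Ky * c - Φ) ^ 2 := fun c => by positivity
  -- step 1 : innermost integral
  have step1 : ∀ (q s : ℝ), 0 < q →
      ∫ a in (-a₀)..a₀, (q + (a + s) ^ 2) ^ (-(3 : ℝ) / 2)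
        = Gaux q (a₀ + s) - Gaux q (-a₀ + s) := by
    intro q s hq
    have hd : ∀ a ∈ Set.uIcc (-a₀) a₀,
        HasDerivAt (fun a => Gaux q (a + s)) ((q + (a + s) ^ 2) ^ (-(3 : ℝ) / 2)) a := by
      intro a _
      have h := (hasDerivAt_Gaux q hq (a + s)).comp a ((hasDerivAt_id a).add_const s)
      simp at h; exact h
    have hi : IntervalIntegrable (fun a => (q + (a + s) ^ 2) ^ (-(3 : ℝ) / 2))
        MeasureTheory.volume (-a₀) a₀ :=
      (Continuous.rpow_const
        (continuous_const.add ((continuous_id.add continuous_const).pow 2))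
        (fun a => Or.inl (ne_of_gt (show 0 < q + (a + s) ^ 2 by positivity)))).intervalIntegrable _ _
    exact intervalIntegral.integral_eq_sub_of_hasDerivAt hd hi
  -- step 2 : middle integral
  have step2 : ∀ q : ℝ, 0 < q →
      ∫ b in (-b₀)..b₀, (Gaux q (K * b - Ω + a₀) - Gaux q (K * b - Ω - a₀))
        = (1 / K) * (Haux q (K * b₀ + a₀ - Ω) - Haux q (K * b₀ - a₀ - Ω)
            - Haux q (K * b₀ - a₀ + Ω) + Haux q (K * b₀ + a₀ + Ω)) := by
    intro q hq
    have hd : ∀ b ∈ Set.uIcc (-b₀) b₀,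
        HasDerivAt (fun b => (Haux q (K * b - Ω + a₀) - Haux q (K * b - Ω - a₀)) / K)
          (Gaux q (K * b - Ω + a₀) - Gaux q (K * b - Ω - a₀)) b := by
      intro b _
      have hl1 : HasDerivAt (fun b : ℝ => K * b - Ω + a₀) K b := by
        simpa using (((hasDerivAt_id b).const_mul K).sub_const Ω).add_const a₀
      have hl2 : HasDerivAt (fun b : ℝ => K * b - Ω - a₀) K b := by
        simpa using (((hasDerivAt_id b).const_mul K).sub_const Ω).sub_const a₀
      have d1 := (hasDerivAt_Haux q hq (K * b - Ω + a₀)).comp b hl1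
      have d2 := (hasDerivAt_Haux q hq (K * b - Ω - a₀)).comp b hl2
      have := (d1.sub d2).div_const K
      refine this.congr_deriv (Eq.symm ?_)
      field_simp
    have hi : IntervalIntegrable
        (fun b => Gaux q (K * b - Ω + a₀) - Gaux q (K * b - Ω - a₀))
        MeasureTheory.volume (-b₀) b₀ :=
      (((contGaux q hq).comp
          ((((continuous_const.mul continuous_id).sub continuous_const)).add continuous_const)).sub
        ((contGaux q hq).comp
          ((((continuous_const.mul continuous_id).sub continuous_const)).sub continuous_const))).intervalIntegrable _ _
    rw [intervalIntegral.integral_eq_sub_of_hasDerivAt hd hi]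
    rw [show K * (-b₀) - Ω + a₀ = -(K * b₀ - a₀ + Ω) by ring,
      show K * (-b₀) - Ω - a₀ = -(K * b₀ + a₀ + Ω) by ring, Haux_neg, Haux_neg,
      show K * b₀ - Ω + a₀ = K * b₀ + a₀ - Ω by ring,
      show K * b₀ - Ω - a₀ = K * b₀ - a₀ - Ω by ring]
    ring
  -- step 3 : outer integral
  have hint : ∀ y : ℝ, IntervalIntegrable
      (fun c => Haux (Ψ ^ 2 + (Ky * c - Φ) ^ 2) y) MeasureTheory.volume (-c₀) c₀ := by
    intro y
    have hc1 : Continuous fun c : ℝ => Ψ ^ 2 + (Ky * c - Φ) ^ 2 :=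
      continuous_const.add (((continuous_const.mul continuous_id).sub continuous_const).pow 2)
    have hcont : Continuous fun c : ℝ =>
        Real.sqrt ((Ψ ^ 2 + (Ky * c - Φ) ^ 2) + y ^ 2) / (Ψ ^ 2 + (Ky * c - Φ) ^ 2) :=
      Continuous.div (Real.continuous_sqrt.comp (hc1.add continuous_const)) hc1
        (fun c => ne_of_gt (hqpos c))
    simpa [Haux] using hcont.intervalIntegrable (-c₀) c₀
  have step3 : ∀ y : ℝ,
      ∫ c in (-c₀)..c₀, Haux (Ψ ^ 2 + (Ky * c - Φ) ^ 2) y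
        = (1 / Ky) * (F Ψ (Ky * c₀ - Φ) y + F Ψ (Ky * c₀ + Φ) y) := by
    intro y
    have hd : ∀ c ∈ Set.uIcc (-c₀) c₀,
        HasDerivAt (fun c => F Ψ (Ky * c - Φ) y / Ky)
          (Haux (Ψ ^ 2 + (Ky * c - Φ) ^ 2) y) c := by
      intro c _
      have hl : HasDerivAt (fun c : ℝ => Ky * c - Φ) Ky c := by
        simpa using ((hasDerivAt_id c).const_mul Ky).sub_const Φ
      have := ((hasDerivAt_F Ψ y hP (Ky * c - Φ)).comp c hl).div_const Ky
      refine this.congr_deriv (Eq.symm ?_)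
      unfold Haux
      field_simp
    rw [intervalIntegral.integral_eq_sub_of_hasDerivAt hd (hint y)]
    rw [show Ky * (-c₀) - Φ = -(Ky * c₀ + Φ) by ring, F_neg]
    field_simp
    ring
  -- assembly
  calc
    (∫ c in (-c₀)..c₀, ∫ b in (-b₀)..b₀, ∫ a in (-a₀)..a₀,
        (1 - 2 * a * Ω - 2 * K * b * Ω - 2 * Ky * c * Φ
          + a ^ 2 + K ^ 2 * b ^ 2 + 2 * K * a * b + Ky ^ 2 * c ^ 2) ^ (-(3 : ℝ) / 2))
      = ∫ c in (-c₀)..c₀, ∫ b in (-b₀)..b₀, ∫ a in (-a₀)..a₀,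
          ((Ψ ^ 2 + (Ky * c - Φ) ^ 2) + (a + (K * b - Ω)) ^ 2) ^ (-(3 : ℝ) / 2) := by
        refine intervalIntegral.integral_congr fun c _ => ?_
        refine intervalIntegral.integral_congr fun b _ => ?_
        refine intervalIntegral.integral_congr fun a _ => ?_
        congr 1
        linear_combination -hone
    _ = ∫ c in (-c₀)..c₀, ∫ b in (-b₀)..b₀,
          (Gaux (Ψ ^ 2 + (Ky * c - Φ) ^ 2) (K * b - Ω + a₀)
            - Gaux (Ψ ^ 2 + (Ky * c - Φ) ^ 2) (K * b - Ω - a₀)) := by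
        refine intervalIntegral.integral_congr fun c _ => ?_
        refine intervalIntegral.integral_congr fun b _ => ?_
        rw [step1 _ (K * b - Ω) (hqpos c),
          show a₀ + (K * b - Ω) = K * b - Ω + a₀ by ring,
          show -a₀ + (K * b - Ω) = K * b - Ω - a₀ by ring]
    _ = ∫ c in (-c₀)..c₀, (1 / K) *
          (Haux (Ψ ^ 2 + (Ky * c - Φ) ^ 2) (K * b₀ + a₀ - Ω)
            - Haux (Ψ ^ 2 + (Ky * c - Φ) ^ 2) (K * b₀ - a₀ - Ω)
            - Haux (Ψ ^ 2 + (Ky * c - Φ) ^ 2) (K * b₀ - a₀ + Ω)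
            + Haux (Ψ ^ 2 + (Ky * c - Φ) ^ 2) (K * b₀ + a₀ + Ω)) := by
        refine intervalIntegral.integral_congr fun c _ => ?_
        exact step2 _ (hqpos c)
    _ = (1 / K) *
          ((∫ c in (-c₀)..c₀, Haux (Ψ ^ 2 + (Ky * c - Φ) ^ 2) (K * b₀ + a₀ - Ω))
            - (∫ c in (-c₀)..c₀, Haux (Ψ ^ 2 + (Ky * c - Φ) ^ 2) (K * b₀ - a₀ - Ω))
            - (∫ c in (-c₀)..c₀, Haux (Ψ ^ 2 + (Ky * c - Φ) ^ 2) (K * b₀ - a₀ + Ω))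
            + (∫ c in (-c₀)..c₀, Haux (Ψ ^ 2 + (Ky * c - Φ) ^ 2) (K * b₀ + a₀ + Ω))) := by
        rw [intervalIntegral.integral_const_mul,
          intervalIntegral.integral_add (((hint _).sub (hint _)).sub (hint _)) (hint _),
          intervalIntegral.integral_sub ((hint _).sub (hint _)) (hint _),
          intervalIntegral.integral_sub (hint _) (hint _)]
    _ = _ := by
        rw [step3, step3, step3, step3]
        field_simp
        ring
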